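/- Let Z be a nonempty finite type, let T be a nonempty finite type with probability weights w : T → ℝ (w t ≥ 0, ∑_t w t = 1), and for each t let p t be a probability distribution on Z. Define Q z = ∑_t w t · p t z. Then for every probability distribution q on Z with q z > 0 whenever Q z > 0, the compensation identity holds: ∑_t w t · KL(p t, q) − ∑_t w t · KL(p t, Q) = KL(Q, q). -/
import Mathlib


/-- KL divergence between finitely supported distributions `p` and `q` on a finite type:
`KL(p, q) = ∑_{z : p z > 0} p z * log (p z / q z)`. -/
noncomputable def KL {Z : Type*} [Fintype Z] (p q : Z → ℝ) : ℝ :=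
  ∑ z, if 0 < p z then p z * Real.log (p z / q z) else 0

/-- Compensation identity: the gap between the expected KL divergence to `q` and to the
mixture `Q` is exactly `KL(Q, q)`. -/
theorem compensation_identity
    {Z T : Type*} [Fintype Z] [Nonempty Z] [Fintype T] [Nonempty T]
    (w : T → ℝ) (hw0 : ∀ t, 0 ≤ w t) (hw1 : ∑ t, w t = 1)
    (p : T → Z → ℝ) (hp0 : ∀ t z, 0 ≤ p t z) (hp1 : ∀ t, ∑ z, p t z = 1)
    (Q : Z → ℝ) (hQ : ∀ z, Q z = ∑ t, w t * p t z)
    (q : Z → ℝ) (hq0 : ∀ z, 0 ≤ q z) (hq1 : ∑ z, q z = 1)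
    (habs : ∀ z, 0 < Q z → 0 < q z) :
    (∑ t, w t * KL (p t) q) - (∑ t, w t * KL (p t) Q) = KL Q q := by
  have hQ0 : ∀ z, 0 ≤ Q z := by
    intro z; rw [hQ z]
    exact Finset.sum_nonneg fun t _ => mul_nonneg (hw0 t) (hp0 t z)
  have key : ∀ t z, w t * ((if 0 < p t z then p t z * Real.log (p t z / q z) else 0)
      - (if 0 < p t z then p t z * Real.log (p t z / Q z) else 0))
      = w t * p t z * (Real.log (Q z) - Real.log (q z)) := by
    intro t z
    rcases eq_or_lt_of_le (hw0 t) with hw | hw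
    · simp [← hw]
    rcases eq_or_lt_of_le (hp0 t z) with hp | hp
    · simp [← hp]
    have hQz : 0 < Q z := by
      rw [hQ z]
      have : w t * p t z ≤ ∑ t', w t' * p t' z :=
        Finset.single_le_sum (fun t' _ => mul_nonneg (hw0 t') (hp0 t' z))
          (Finset.mem_univ t)
      linarith [mul_pos hw hp]
    have hqz : 0 < q z := habs z hQz
    rw [if_pos hp, if_pos hp,
      Real.log_div (ne_of_gt hp) (ne_of_gt hqz),
      Real.log_div (ne_of_gt hp) (ne_of_gt hQz)]
    ring
  calc (∑ t, w t * KL (p t) q) - (∑ t, w t * KL (p t) Q)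
      = ∑ t, ∑ z, w t * ((if 0 < p t z then p t z * Real.log (p t z / q z) else 0)
          - (if 0 < p t z then p t z * Real.log (p t z / Q z) else 0)) := by
        unfold KL
        rw [← Finset.sum_sub_distrib]
        refine Finset.sum_congr rfl fun t _ => ?_
        rw [Finset.mul_sum, Finset.mul_sum, ← Finset.sum_sub_distrib]
        refine Finset.sum_congr rfl fun z _ => by ring
    _ = ∑ z, Q z * (Real.log (Q z) - Real.log (q z)) := by
        rw [Finset.sum_comm]
        refine Finset.sum_congr rfl fun z _ => ?_
        simp_rw [key]
        rw [← Finset.sum_mul, ← hQ z]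
    _ = KL Q q := by
        unfold KL
        refine Finset.sum_congr rfl fun z _ => ?_
        rcases eq_or_lt_of_le (hQ0 z) with h | h
        · simp [← h]
        rw [if_pos h, Real.log_div (ne_of_gt h) (ne_of_gt (habs z h))]
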